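/- Let K be a finite extension of ℚ_p and let D be a disk (open or closed) in the algebraic closure of ℚ_p that is invariant under the absolute Galois group of K. If D contains an element a of degree n over K, then D contains an element b whose degree over K is at most p^s, where s is the p-adic valuation of n. -/

import Mathlib

open Polynomial

lemma aux_not_dvd_choose (p : ℕ) [hp : Fact p.Prime] {n : ℕ} (hn : n ≠ 0) :
    ¬ p ∣ Nat.choose n (p ^ padicValNat p n) := by
  set s := padicValNat p n with hs
  have hdvd : p ^ s ∣ n := pow_padicValNat_dvd
  have hle : p ^ s ≤ n := Nat.le_of_dvd (Nat.pos_of_ne_zero hn) hdvd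
  have hppos : 0 < p := hp.out.pos
  have hp1 : 1 < p := hp.out.one_lt
  have hval : padicValNat p (Nat.choose n (p ^ s)) = 0 := by
    rw [padicValNat_choose hle (Nat.lt_succ_self _)]
    rw [Finset.card_eq_zero, Finset.filter_eq_empty_iff]
    intro i hi
    rw [Finset.mem_Ico] at hi
    obtain ⟨hi1, _⟩ := hi
    by_cases hcase : i ≤ s
    · have h1 : p ^ i ∣ p ^ s := pow_dvd_pow p hcase
      have h2 : p ^ i ∣ n - p ^ s := Nat.dvd_sub (h1.trans hdvd) h1
      have e1 : p ^ s % p ^ i = 0 := Nat.mod_eq_zero_of_dvd h1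
      have e2 : (n - p ^ s) % p ^ i = 0 := Nat.mod_eq_zero_of_dvd h2
      have := pow_pos hppos i
      omega
    · push_neg at hcase
      obtain ⟨m, hnm⟩ : ∃ m, n = p ^ s * m := hdvd
      have hpm : ¬ p ∣ m := by
        rintro ⟨c, hc⟩
        exact pow_succ_padicValNat_not_dvd hn ⟨c, by rw [← hs, hnm, hc, pow_succ]; ring⟩
      have hm1 : 1 ≤ m := by
        rcases Nat.eq_zero_or_pos m with h | h
        · exfalso; apply hn; rw [hnm, h, mul_zero]
        · exact h
      set v := p ^ (i - s) with hv
      have hv1 : 1 < v := Nat.one_lt_pow (by omega) hp1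
      have hiv : p ^ i = p ^ s * v := by
        rw [hv, ← pow_add]; congr 1; omega
      have hps : 0 < p ^ s := pow_pos hppos s
      have hmod1 : p ^ s % p ^ i = p ^ s := by
        apply Nat.mod_eq_of_lt
        calc p ^ s < p ^ s * v := by nlinarith
        _ = p ^ i := hiv.symm
      have hsub : n - p ^ s = p ^ s * (m - 1) := by
        obtain ⟨m', rfl⟩ : ∃ m', m = m' + 1 := ⟨m - 1, by omega⟩
        rw [hnm, Nat.add_sub_cancel, Nat.mul_add, mul_one]
        omega
      have hmod2 : (n - p ^ s) % p ^ i = p ^ s * ((m - 1) % v) := by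
        rw [hsub, hiv, Nat.mul_mod_mul_left]
      rw [hmod1, hmod2, hiv]
      intro hcon
      have hlt : (m - 1) % v < v := Nat.mod_lt _ (by positivity)
      have hvw : v ≤ 1 + (m - 1) % v := by
        apply Nat.le_of_mul_le_mul_left _ hps
        rw [Nat.mul_add, mul_one]
        exact hcon
      have heq : (m - 1) % v = v - 1 := by omega
      have hq := Nat.div_add_mod (m - 1) v
      set q := (m - 1) / v with hqdef
      have hmval : m = v * q + v := by omega
      apply hpm
      have hpv : p ∣ v := dvd_pow_self p (by omega)
      exact Dvd.dvd.trans hpv ⟨q + 1, by rw [hmval]; ring⟩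
  intro hdvd2
  have hcpos : 0 < Nat.choose n (p ^ s) := Nat.choose_pos hle
  exact (dvd_iff_padicValNat_ne_zero hcpos.ne').mp hdvd2 hval




variable {Cp : Type*} [NormedField Cp] [IsUltrametricDist Cp] in
lemma aux_coeff_prod_bound (S : Multiset Cp) (ρ : ℝ) (hρ : 0 ≤ ρ)
    (hS : ∀ r ∈ S, ‖r‖ ≤ ρ) :
    ∀ j ≤ Multiset.card S,
      ‖((S.map fun r => X - C r).prod).coeff j‖ ≤ ρ ^ (Multiset.card S - j) := by
  induction S using Multiset.induction with
  | empty =>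
    intro j hj
    simp only [Multiset.card_zero, Nat.le_zero] at hj
    subst hj
    simp
  | cons r S ih =>
    intro j hj
    have hr : ‖r‖ ≤ ρ := hS r (Multiset.mem_cons_self r S)
    have hS' : ∀ x ∈ S, ‖x‖ ≤ ρ := fun x hx => hS x (Multiset.mem_cons_of_mem hx)
    set Q : Polynomial Cp := (S.map fun r => X - C r).prod with hQ
    have hProd : ((r ::ₘ S).map fun r => X - C r).prod = (X - C r) * Q := by
      rw [Multiset.map_cons, Multiset.prod_cons]
    have hQdeg : Q.natDegree = Multiset.card S := by
      rw [hQ]; exact natDegree_multiset_prod_X_sub_C_eq_card S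
    rw [hProd]
    rw [Multiset.card_cons] at hj ⊢
    rcases j with _ | i
    · rw [mul_coeff_zero]
      simp only [coeff_sub, coeff_X_zero, coeff_C_zero, zero_sub, norm_mul, norm_neg]
      calc ‖r‖ * ‖Q.coeff 0‖ ≤ ρ * ρ ^ (Multiset.card S - 0) := by
            apply mul_le_mul hr (ih hS' 0 (Nat.zero_le _)) (norm_nonneg _) hρ
        _ = ρ ^ (Multiset.card S + 1 - 0) := by
            rw [Nat.sub_zero, Nat.sub_zero, ← pow_succ']
    · have hcoeff : ((X - C r) * Q).coeff (i + 1) = Q.coeff i - r * Q.coeff (i + 1) := by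
        rw [sub_mul, coeff_sub, coeff_X_mul, coeff_C_mul]
      rw [hcoeff]
      have hi : i ≤ Multiset.card S := by omega
      have h1 : ‖Q.coeff i‖ ≤ ρ ^ (Multiset.card S - i) := ih hS' i hi
      have h2 : ‖r * Q.coeff (i + 1)‖ ≤ ρ ^ (Multiset.card S - i) := by
        rcases Nat.lt_or_ge i (Multiset.card S) with h | h
        · have h3 : ‖Q.coeff (i + 1)‖ ≤ ρ ^ (Multiset.card S - (i + 1)) := ih hS' (i + 1) h
          rw [norm_mul]
          calc ‖r‖ * ‖Q.coeff (i + 1)‖ ≤ ρ * ρ ^ (Multiset.card S - (i + 1)) :=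
                mul_le_mul hr h3 (norm_nonneg _) hρ
            _ = ρ ^ (Multiset.card S - i) := by
                rw [← pow_succ']
                congr 1
                omega
        · have : i = Multiset.card S := le_antisymm hi h
          have hz : Q.coeff (i + 1) = 0 :=
            coeff_eq_zero_of_natDegree_lt (by omega)
          rw [hz, mul_zero, norm_zero]
          positivity
      calc ‖Q.coeff i - r * Q.coeff (i + 1)‖
          ≤ max ‖Q.coeff i‖ ‖r * Q.coeff (i + 1)‖ := by
            rw [sub_eq_add_neg]
            refine (IsUltrametricDist.norm_add_le_max _ _).trans ?_
            rw [norm_neg]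
        _ ≤ ρ ^ (Multiset.card S - i) := max_le h1 h2
        _ = ρ ^ (Multiset.card S + 1 - (i + 1)) := by congr 1; omega

variable {Cp : Type*} [NormedField Cp] [IsUltrametricDist Cp] in
lemma aux_root_bound (T : Polynomial Cp) (N : ℕ) (hN : 0 < N) (ρ : ℝ) (hρ : 0 ≤ ρ)
    (hdeg : T.natDegree ≤ N) (hlead : 1 ≤ ‖T.coeff N‖)
    (hcoef : ∀ i < N, ‖T.coeff i‖ ≤ ρ ^ (N - i)) (x : Cp) (hx : T.eval x = 0) :
    ‖x‖ ≤ ρ := by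
  by_contra hcon
  push_neg at hcon
  have hx0 : 0 < ‖x‖ := lt_of_le_of_lt hρ hcon
  have heval : (0 : ℝ) = ‖∑ i ∈ Finset.range (N + 1), T.coeff i * x ^ i‖ := by
    rw [← eval_eq_sum_range' (Nat.lt_succ_of_le hdeg), hx, norm_zero]
  rw [Finset.sum_range_succ] at heval
  have hkey : ‖T.coeff N * x ^ N‖ = ‖∑ i ∈ Finset.range N, T.coeff i * x ^ i‖ := by
    have h0 : T.coeff N * x ^ N = -∑ i ∈ Finset.range N, T.coeff i * x ^ i := by
      have : ∑ i ∈ Finset.range N, T.coeff i * x ^ i + T.coeff N * x ^ N = 0 := by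
        have := heval
        symm at this
        rwa [norm_eq_zero] at this
      linear_combination this
    rw [h0, norm_neg]
  have hbig : ‖x‖ ^ N ≤ ‖T.coeff N * x ^ N‖ := by
    rw [norm_mul, norm_pow]
    nlinarith [pow_pos hx0 N]
  have hsmall : ‖∑ i ∈ Finset.range N, T.coeff i * x ^ i‖ ≤ ρ * ‖x‖ ^ (N - 1) := by
    apply IsUltrametricDist.norm_sum_le_of_forall_le_of_nonneg
    · positivity
    · intro i hi
      rw [Finset.mem_range] at hi
      rw [norm_mul, norm_pow]
      calc ‖T.coeff i‖ * ‖x‖ ^ i ≤ ρ ^ (N - i) * ‖x‖ ^ i :=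
            mul_le_mul_of_nonneg_right (hcoef i hi) (by positivity)
        _ = ρ * ρ ^ (N - i - 1) * ‖x‖ ^ i := by
            have he : ρ ^ (N - i) = ρ * ρ ^ (N - i - 1) := by
              rw [← pow_succ']
              congr 1
              omega
            rw [he]
        _ ≤ ρ * ‖x‖ ^ (N - i - 1) * ‖x‖ ^ i := by
            gcongr
        _ = ρ * ‖x‖ ^ (N - 1) := by
            rw [mul_assoc, ← pow_add]
            congr 2
            omega
  have hfinal : ρ * ‖x‖ ^ (N - 1) < ‖x‖ ^ N := by
    have hxp : 0 < ‖x‖ ^ (N - 1) := pow_pos hx0 _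
    calc ρ * ‖x‖ ^ (N - 1) < ‖x‖ * ‖x‖ ^ (N - 1) := by nlinarith
      _ = ‖x‖ ^ N := by rw [← pow_succ']; congr 1; omega
  have := hbig.trans (hkey.le.trans hsmall)
  linarith

/-- A (rational, open or closed) disk in `Cp` with positive radius. -/
def IsDisk {Cp : Type*} [NormedField Cp] (D : Set Cp) : Prop :=
  ∃ (a : Cp) (r : ℝ), 0 < r ∧
    (D = {x | ‖x - a‖ ≤ r} ∨ D = {x | ‖x - a‖ < r})

/-- if a disk `D`, invariant under the absolute Galois group of a finite
extension `K` of `ℚ_p`, contains an element `a` of degree `n` over `K`, then it contains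
an element `b` of degree at most `p ^ (v_p n)` over `K`.  Here the algebraic closure of
`ℚ_p` is modelled as an algebraically closed normed field `Cp`, algebraic over `ℚ_p`,
whose norm extends the `p`-adic norm. -/
theorem statement_0 (p : ℕ) [Fact p.Prime] (Cp : Type*) [NormedField Cp]
    [IsUltrametricDist Cp] [Algebra ℚ_[p] Cp] [IsAlgClosed Cp]
    (halg : Algebra.IsAlgebraic ℚ_[p] Cp)
    (hnorm : ∀ x : ℚ_[p], ‖algebraMap ℚ_[p] Cp x‖ = ‖x‖)
    (K : IntermediateField ℚ_[p] Cp) [FiniteDimensional ℚ_[p] K]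
    (D : Set Cp) (hD : IsDisk D)
    (hinv : ∀ σ : Cp ≃ₐ[K] Cp, σ '' D = D)
    (n : ℕ) (a : Cp) (ha : a ∈ D)
    (hdeg : Module.finrank K (IntermediateField.adjoin K {a}) = n) :
    ∃ b ∈ D, Module.finrank K (IntermediateField.adjoin K {b}) ≤ p ^ (padicValNat p n) := by
  classical
  haveI := halg
  haveI halgK : Algebra.IsAlgebraic K Cp := Algebra.IsAlgebraic.tower_top (K := ℚ_[p]) ↥K
  have hint : ∀ x : Cp, IsIntegral ↥K x := fun x =>
    (Algebra.IsAlgebraic.isAlgebraic (R := ↥K) x).isIntegral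
  set f := minpoly ↥K a with hf
  have hmono : f.Monic := minpoly.monic (hint a)
  have hnn : f.natDegree = n := by
    rw [← hdeg, IntermediateField.adjoin.finrank (hint a)]
  have hn0 : 0 < n := hnn ▸ minpoly.natDegree_pos (hint a)
  set s := padicValNat p n with hs
  set N := p ^ s with hN
  have hNdvd : N ∣ n := pow_padicValNat_dvd
  have hNle : N ≤ n := Nat.le_of_dvd hn0 hNdvd
  have hN0 : 0 < N := pow_pos (Fact.out (p := p.Prime)).pos s
  set d := n - N with hd
  have hdN : d + N = n := by omega
  set ι := algebraMap ↥K Cp with hι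
  set fC := f.map ι with hfC
  have hfCmonic : fC.Monic := hmono.map ι
  have hfCdeg : fC.natDegree = n := by rw [hfC, natDegree_map, hnn]
  have hsplit : Splits fC := IsAlgClosed.splits fC
  have hcard : Multiset.card fC.roots = n := by
    rw [splits_iff_card_roots.mp hsplit, hfCdeg]
  -- all roots of `fC` lie in `D`
  have hRD : ∀ y ∈ fC.roots, y ∈ D := by
    intro y hy
    have hy0 : Polynomial.aeval y f = 0 := by
      have h1 := (mem_roots hfCmonic.ne_zero).mp hy
      rwa [IsRoot, hfC, eval_map, ← aeval_def] at h1
    obtain ⟨φ, hφ⟩ := IntermediateField.exists_algHom_of_splits_of_aeval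
      (K := Cp) (fun z => ⟨hint z, IsAlgClosed.splits _⟩) hy0
    haveI : NoZeroSMulDivisors ↥K Cp :=
      inferInstance
    have hbij : Function.Bijective φ := Algebra.IsAlgebraic.algHom_bijective φ
    set σ : Cp ≃ₐ[↥K] Cp := AlgEquiv.ofBijective φ hbij with hσ
    have : σ a = y := hφ
    rw [← hinv σ]
    exact ⟨a, ha, this⟩
  -- the radius
  set Rts := fC.roots with hRts
  have hane : (insert a Rts.toFinset).Nonempty := ⟨a, Finset.mem_insert_self a _⟩
  set ρ := (insert a Rts.toFinset).sup' hane (fun y => ‖y - a‖) with hρdef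
  have hρ0 : 0 ≤ ρ := by
    rw [hρdef]
    have h := Finset.le_sup' (fun y => ‖y - a‖) (Finset.mem_insert_self a Rts.toFinset)
    rw [sub_self, norm_zero] at h
    exact h
  have hρy : ∀ y ∈ Rts, ‖y - a‖ ≤ ρ := by
    intro y hy
    rw [hρdef]
    exact Finset.le_sup' (fun z => ‖z - a‖) (Finset.mem_insert_of_mem (Multiset.mem_toFinset.mpr hy))
  -- everything within `ρ` of `a` lies in `D`
  have hmemD : ∀ x : Cp, ‖x - a‖ ≤ ρ → x ∈ D := by
    intro x hx
    obtain ⟨y₀, hy₀mem, hy₀⟩ := Finset.exists_mem_eq_sup' hane (fun y => ‖y - a‖)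
    have hy₀D : y₀ ∈ D := by
      rcases Finset.mem_insert.mp hy₀mem with h | h
      · rw [h]; exact ha
      · exact hRD y₀ (Multiset.mem_toFinset.mp h)
    obtain ⟨c, r, hr, hDeq | hDeq⟩ := hD
    · rw [hDeq] at ha hy₀D ⊢
      simp only [Set.mem_setOf_eq] at ha hy₀D ⊢
      have h1 : ‖x - c‖ ≤ max ‖x - a‖ ‖a - c‖ := by
        have h := IsUltrametricDist.norm_add_le_max (x - a) (a - c)
        rwa [sub_add_sub_cancel] at h
      have h2 : ‖y₀ - a‖ ≤ max ‖y₀ - c‖ ‖a - c‖ := by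
        have h := IsUltrametricDist.norm_add_le_max (y₀ - c) (c - a)
        rw [sub_add_sub_cancel] at h
        rwa [norm_sub_rev c a] at h
      have hρr : ρ ≤ r := by
        rw [hρdef, hy₀]
        exact h2.trans (max_le hy₀D ha)
      exact h1.trans (max_le (hx.trans hρr) ha)
    · rw [hDeq] at ha hy₀D ⊢
      simp only [Set.mem_setOf_eq] at ha hy₀D ⊢
      have h1 : ‖x - c‖ ≤ max ‖x - a‖ ‖a - c‖ := by
        have h := IsUltrametricDist.norm_add_le_max (x - a) (a - c)
        rwa [sub_add_sub_cancel] at h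
      have h2 : ‖y₀ - a‖ ≤ max ‖y₀ - c‖ ‖a - c‖ := by
        have h := IsUltrametricDist.norm_add_le_max (y₀ - c) (c - a)
        rw [sub_add_sub_cancel] at h
        rwa [norm_sub_rev c a] at h
      have hρr : ρ < r := by
        rw [hρdef, hy₀]
        exact lt_of_le_of_lt h2 (max_lt hy₀D ha)
      exact lt_of_le_of_lt h1 (max_lt (hx.trans_lt hρr) ha)
  -- the shifted polynomial
  set P := taylor a fC with hP
  have hPprod : P = ((Rts.map fun y => y - a).map fun z => X - C z).prod := by
    rw [hP]
    conv_lhs => rw [hsplit.eq_prod_roots_of_monic hfCmonic]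
    have : (taylor a) ((Rts.map fun y => X - C y).prod)
        = (taylorAlgHom a) ((Rts.map fun y => X - C y).prod) := rfl
    rw [this, map_multiset_prod, Multiset.map_map, Multiset.map_map]
    congr 1
    apply Multiset.map_congr rfl
    intro y _
    simp only [Function.comp_apply, taylorAlgHom_apply, taylor_apply, sub_comp, X_comp, C_comp]
    rw [map_sub]
    ring
  have hcardS : Multiset.card (Rts.map fun y => y - a) = n := by
    rw [Multiset.card_map]; exact hcard
  have hPcoeff : ∀ j ≤ n, ‖P.coeff j‖ ≤ ρ ^ (n - j) := by
    intro j hj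
    have hb := aux_coeff_prod_bound (Rts.map fun y => y - a) ρ hρ0
      (by
        intro r hr
        obtain ⟨y, hy, rfl⟩ := Multiset.mem_map.mp hr
        exact hρy y hy) j (by rwa [hcardS])
    rw [hcardS] at hb
    rwa [hPprod]
  have hPmon : P.Monic := by
    rw [hPprod]
    apply monic_multiset_prod_of_monic
    intro z hz
    obtain ⟨y, _, rfl⟩ := Multiset.mem_map.mp hz
    exact monic_X_sub_C _
  have hPdeg : P.natDegree = n := by
    rw [hPprod, natDegree_multiset_prod_X_sub_C_eq_card, hcardS]
  have hPlead : P.coeff n = 1 := by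
    rw [← hPdeg]; exact hPmon.coeff_natDegree
  -- the Hasse derivative
  set Q := hasseDeriv d P with hQdef
  have hQc : ∀ i, Q.coeff i = ((i + d).choose d : Cp) * P.coeff (i + d) := by
    intro i
    rw [hQdef, hasseDeriv_coeff]
  have hnat : ∀ k : ℕ, ‖((k : ℕ) : Cp)‖ ≤ 1 := by
    intro k
    rw [show ((k : ℕ) : Cp) = algebraMap ℚ_[p] Cp ((k : ℕ) : ℚ_[p]) by rw [map_natCast], hnorm]
    have h := Padic.norm_int_le_one (p := p) (k : ℤ)
    simpa using h
  have hQsmall : ∀ i, i < N → ‖Q.coeff i‖ ≤ ρ ^ (N - i) := by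
    intro i hi
    rw [hQc i, norm_mul]
    have h1 : ‖P.coeff (i + d)‖ ≤ ρ ^ (n - (i + d)) := hPcoeff _ (by omega)
    have h2 : n - (i + d) = N - i := by omega
    rw [h2] at h1
    calc ‖((i + d).choose d : Cp)‖ * ‖P.coeff (i + d)‖ ≤ 1 * ρ ^ (N - i) :=
          mul_le_mul (hnat _) h1 (norm_nonneg _) zero_le_one
      _ = ρ ^ (N - i) := one_mul _
  have hQlead : ‖Q.coeff N‖ = 1 := by
    have hNd : N + d = n := by omega
    rw [hQc N, hNd, hPlead, mul_one]
    have hdc : Nat.choose n d = Nat.choose n N := by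
      rw [hd]; exact Nat.choose_symm hNle
    have hch : ¬ (p ∣ Nat.choose n d) := by
      rw [hdc, hN, hs]; exact aux_not_dvd_choose p hn0.ne'
    rw [show ((n.choose d : ℕ) : Cp) = algebraMap ℚ_[p] Cp ((n.choose d : ℕ) : ℚ_[p]) by
      rw [map_natCast], hnorm]
    apply le_antisymm
    · have h := Padic.norm_int_le_one (p := p) (n.choose d : ℤ)
      simpa using h
    · by_contra hlt
      push_neg at hlt
      have h1 : ‖((n.choose d : ℤ) : ℚ_[p])‖ < 1 := by
        simpa using hlt
      rw [Padic.norm_intCast_lt_one_iff] at h1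
      exact hch (by exact_mod_cast h1)
  have hQdegle : Q.natDegree ≤ N :=
    le_trans (natDegree_hasseDeriv_le P d) (by rw [hPdeg]; omega)
  have hQne : Q.coeff N ≠ 0 := by
    intro h
    rw [h, norm_zero] at hQlead
    norm_num at hQlead
  have hdegQ : Q.degree ≠ 0 := by
    intro h
    have h1 : (N : WithBot ℕ) ≤ Q.degree := le_degree_of_ne_zero hQne
    rw [h] at h1
    have : N ≤ 0 := by exact_mod_cast h1
    omega
  obtain ⟨x, hxroot⟩ := IsAlgClosed.exists_root Q hdegQ
  have hxle : ‖x‖ ≤ ρ := aux_root_bound Q N hN0 ρ hρ0 hQdegle (by rw [hQlead]) hQsmall x hxroot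
  refine ⟨x + a, hmemD _ (by rwa [add_sub_cancel_right]), ?_⟩
  -- the polynomial over K of degree N annihilating x + a
  set g := hasseDeriv d f with hg
  have hgmap : g.map ι = hasseDeriv d fC := by
    ext i
    rw [coeff_map, hg, hasseDeriv_coeff, hasseDeriv_coeff, hfC, coeff_map, map_mul, map_natCast]
  have hcomm : Q = taylor a (hasseDeriv d fC) := by
    ext i
    rw [taylor_coeff]
    have h1 : hasseDeriv i (hasseDeriv d fC) = (i + d).choose i • hasseDeriv (i + d) fC := by
      have h := LinearMap.congr_fun (hasseDeriv_comp (R := Cp) i d) fC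
      simpa using h
    rw [h1, eval_smul, hQc i, hP, taylor_coeff, nsmul_eq_mul, Nat.choose_symm_add]
  have haev : Polynomial.aeval (x + a) g = 0 := by
    rw [aeval_def, ← eval_map, hgmap, ← taylor_eval a (hasseDeriv d fC) x, ← hcomm]
    exact hxroot
  haveI : CharZero ↥K := charZero_of_injective_algebraMap (algebraMap ℚ_[p] ↥K).injective
  have hgne : g ≠ 0 := by
    intro h0
    have hz : g.coeff N = 0 := by rw [h0]; simp
    rw [hg, hasseDeriv_coeff] at hz
    have hNd : N + d = n := by omega
    rw [hNd] at hz
    have hfn : f.coeff n = 1 := by rw [← hnn]; exact hmono.coeff_natDegree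
    rw [hfn, mul_one] at hz
    have hne : ((n.choose d : ℕ) : ↥K) ≠ 0 := by
      exact_mod_cast (Nat.choose_pos (by omega : d ≤ n)).ne'
    exact hne hz
  have hgdeg : g.natDegree ≤ N :=
    le_trans (natDegree_hasseDeriv_le f d) (by rw [hnn]; omega)
  rw [IntermediateField.adjoin.finrank (hint (x + a))]
  calc (minpoly ↥K (x + a)).natDegree ≤ g.natDegree :=
        Polynomial.natDegree_le_natDegree (minpoly.degree_le_of_ne_zero ↥K (x + a) hgne haev)
    _ ≤ N := hgdeg
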